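/- For every fixed l ∈ ℕ with l ≥ 1 and every sequence of natural numbers M : ℕ → ℕ with 1 ≤ M(K) for all K and M(K)/K → 0 as K → ∞, one has lim_{K→∞} [(1 − l·M(K)/K) · H2(M(K)/(K − l·M(K)))] / H2(M(K)/K) = 1 (the expressions being defined for all sufficiently large K since M(K)/K → 0). -/

import Mathlib

open Filter Real

open Set in

lemma lemA : Tendsto (fun x : ℝ => Real.binEntropy x / (-(x * Real.log x))) (nhdsWithin 0 (Ioi 0)) (nhds 1) := by
  have hmem : Ioo (0:ℝ) 2⁻¹ ∈ nhdsWithin (0:ℝ) (Ioi 0) :=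
    Ioo_mem_nhdsGT_of_mem ⟨le_refl 0, by norm_num⟩
  have hglim : Tendsto (fun x : ℝ => (-Real.log x)⁻¹) (nhdsWithin 0 (Ioi 0)) (nhds 0) :=
    tendsto_inv_atTop_zero.comp (tendsto_neg_atBot_atTop.comp Real.tendsto_log_nhdsGT_zero)
  have key : Tendsto (fun x : ℝ => (1 - x) * Real.log (1 - x) / (x * Real.log x))
      (nhdsWithin 0 (Ioi 0)) (nhds 0) := by
    apply squeeze_zero' (g := fun x : ℝ => (-Real.log x)⁻¹)
    · filter_upwards [hmem] with x hx
      have hx0 : (0:ℝ) < x := hx.1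
      have hx1 : x < 1 := hx.2.trans (by norm_num)
      have h1 : (0:ℝ) < 1 - x := by linarith
      have hlx : Real.log x < 0 := Real.log_neg hx0 hx1
      have hl1 : Real.log (1 - x) ≤ 0 := Real.log_nonpos h1.le (by linarith)
      have heq : (1 - x) * Real.log (1 - x) / (x * Real.log x)
          = (1 - x) * (-Real.log (1 - x)) / (x * (-Real.log x)) := by
        rw [mul_neg, mul_neg, neg_div_neg_eq]
      rw [heq]
      exact div_nonneg (mul_nonneg h1.le (by linarith)) (mul_nonneg hx0.le (by linarith))
    · filter_upwards [hmem] with x hx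
      have hx0 : (0:ℝ) < x := hx.1
      have hx1 : x < 1 := hx.2.trans (by norm_num)
      have h1 : (0:ℝ) < 1 - x := by linarith
      have hlx : Real.log x < 0 := Real.log_neg hx0 hx1
      have hnum : (1 - x) * (-Real.log (1 - x)) ≤ x := by
        have h2 := Real.log_le_sub_one_of_pos (inv_pos.mpr h1)
        rw [Real.log_inv] at h2
        calc (1 - x) * (-Real.log (1 - x)) ≤ (1 - x) * ((1-x)⁻¹ - 1) :=
              mul_le_mul_of_nonneg_left h2 h1.le
          _ = x := by field_simp; ring
      have heq : (1 - x) * Real.log (1 - x) / (x * Real.log x)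
          = (1 - x) * (-Real.log (1 - x)) / (x * (-Real.log x)) := by
        rw [mul_neg, mul_neg, neg_div_neg_eq]
      rw [heq]
      have hd : (0:ℝ) < x * (-Real.log x) := mul_pos hx0 (by linarith)
      have h3 : (1 - x) * (-Real.log (1 - x)) / (x * (-Real.log x)) ≤ x / (x * (-Real.log x)) := by
        gcongr
      refine h3.trans_eq ?_
      exact div_mul_cancel_left₀ hx0.ne' _
    · exact hglim
  have h4 := (tendsto_const_nhds (x := (1:ℝ)) (f := nhdsWithin (0:ℝ) (Ioi 0))).add key
  rw [add_zero] at h4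
  refine h4.congr' ?_
  filter_upwards [hmem] with x hx
  have hx0 : (0:ℝ) < x := hx.1
  have hx1 : x < 1 := hx.2.trans (by norm_num)
  have hlx : Real.log x < 0 := Real.log_neg hx0 hx1
  have hxl : x * Real.log x ≠ 0 := (mul_neg_of_pos_of_neg hx0 hlx).ne
  have hne : -(x * Real.log x) ≠ 0 := neg_ne_zero.mpr hxl
  rw [eq_div_iff hne, Real.binEntropy, Real.log_inv, Real.log_inv]
  field_simp [hlx.ne]
  ring

open Set in

lemma lemB (c : ℝ) (hc : 0 ≤ c) :
    Tendsto (fun x : ℝ => (1 - c * x) * Real.binEntropy (x / (1 - c * x)) / Real.binEntropy x)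
      (nhdsWithin 0 (Ioi 0)) (nhds 1) := by
  set δ : ℝ := (2 * (c + 1))⁻¹ with hδ
  have hδ0 : 0 < δ := by positivity
  have hmem : Ioo (0:ℝ) δ ∈ nhdsWithin (0:ℝ) (Ioi 0) :=
    Ioo_mem_nhdsGT_of_mem ⟨le_refl 0, hδ0⟩
  have facts : ∀ x ∈ Ioo (0:ℝ) δ, 0 < x ∧ x < 1 ∧ (1:ℝ)/2 < 1 - c * x ∧
      0 < x / (1 - c * x) ∧ x / (1 - c * x) < 1 := by
    intro x hx
    have hx0 : 0 < x := hx.1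
    have h2 : x * (2 * (c + 1)) < 1 := by
      have h3 := hx.2
      rw [hδ, inv_eq_one_div, lt_div_iff₀ (by positivity)] at h3
      exact h3
    have hcx : c * x < 1/2 := by nlinarith
    have h1cx : (1:ℝ)/2 < 1 - c * x := by linarith
    refine ⟨hx0, by nlinarith, h1cx, div_pos hx0 (by linarith), ?_⟩
    rw [div_lt_one (by linarith)]
    nlinarith
  have hq : Tendsto (fun x : ℝ => x / (1 - c * x)) (nhdsWithin 0 (Ioi 0)) (nhdsWithin 0 (Ioi 0)) := by
    rw [tendsto_nhdsWithin_iff]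
    constructor
    · have hcont : ContinuousAt (fun x : ℝ => x / (1 - c * x)) 0 := by
        apply ContinuousAt.div
        · exact continuousAt_id
        · fun_prop
        · norm_num
      have h6 : Tendsto (fun x : ℝ => x / (1 - c * x)) (nhds 0) (nhds 0) := by
        simpa using hcont.tendsto
      exact h6.mono_left nhdsWithin_le_nhds
    · filter_upwards [hmem] with x hx
      exact (facts x hx).2.2.2.1
  have hA : Tendsto (fun x : ℝ =>
      (Real.binEntropy (x / (1 - c * x)) / (-((x / (1 - c * x)) * Real.log (x / (1 - c * x)))))
        / (Real.binEntropy x / (-(x * Real.log x)))) (nhdsWithin 0 (Ioi 0)) (nhds 1) := by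
    have := (lemA.comp hq).div lemA one_ne_zero
    rw [div_one] at this
    exact this
  have hB : Tendsto (fun x : ℝ => 1 - Real.log (1 - c * x) * (Real.log x)⁻¹)
      (nhdsWithin 0 (Ioi 0)) (nhds 1) := by
    have hlog1 : Tendsto (fun x : ℝ => Real.log (1 - c * x)) (nhdsWithin 0 (Ioi 0)) (nhds 0) := by
      have hcont : ContinuousAt (fun x : ℝ => Real.log (1 - c * x)) 0 := by
        apply ContinuousAt.log
        · fun_prop
        · norm_num
      have h6 : Tendsto (fun x : ℝ => Real.log (1 - c * x)) (nhds 0) (nhds 0) := by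
        simpa using hcont.tendsto
      exact h6.mono_left nhdsWithin_le_nhds
    have hinv : Tendsto (fun x : ℝ => (Real.log x)⁻¹) (nhdsWithin 0 (Ioi 0)) (nhds 0) := by
      have h5 := (tendsto_neg_atBot_atTop.comp Real.tendsto_log_nhdsGT_zero).inv_tendsto_atTop
      have h7 := h5.neg
      simp only [Pi.inv_apply, Function.comp] at h7 ⊢
      rw [neg_zero] at h7
      refine h7.congr fun x => ?_
      rw [inv_neg, neg_neg]
    have := (tendsto_const_nhds (x := (1:ℝ))).sub (hlog1.mul hinv)
    simpa using this
  have hfin := hA.mul hB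
  rw [mul_one] at hfin
  refine hfin.congr' ?_
  have key : ∀ u v q Lq Lx x : ℝ, q ≠ 0 → v ≠ 0 → Lq ≠ 0 → Lx ≠ 0 → x ≠ 0 →
      u / (-(q * Lq)) / (v / (-(x * Lx))) * (1 - (Lx - Lq) * Lx⁻¹) = x / q * u / v := by
    intro u v q Lq Lx x hq hv hLq hLx hx
    field_simp
    ring
  filter_upwards [hmem] with x hx
  obtain ⟨hx0, hx1, h1cx, hq0, hq1⟩ := facts x hx
  set q := x / (1 - c * x) with hqdef
  have h1cx0 : (0:ℝ) < 1 - c * x := by linarith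
  have hqx : q * (1 - c * x) = x := div_mul_cancel₀ _ h1cx0.ne'
  have hlq : Real.log q < 0 := Real.log_neg hq0 hq1
  have hlx : Real.log x < 0 := Real.log_neg hx0 hx1
  have hHx : 0 < Real.binEntropy x := Real.binEntropy_pos hx0 hx1
  have hlogsub : Real.log (1 - c * x) = Real.log x - Real.log q := by
    rw [hqdef, Real.log_div hx0.ne' h1cx0.ne']
    ring
  have hrw : 1 - c * x = x / q := by
    field_simp [hq0.ne']
    linarith [hqx]
  rw [hlogsub, hrw]
  exact key _ _ _ _ _ _ hq0.ne' hHx.ne' hlq.ne hlx.ne hx0.ne'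

/-- **Sufficient condition for `M`-approximate private search with `M = o(K)`.** For every fixed
`l ≥ 1` and every sequence `M : ℕ → ℕ` with `1 ≤ M K` for all `K` and `M K / K → 0`, the ratio
`(1 - l·M(K)/K) · H₂(M(K)/(K - l·M(K))) / H₂(M(K)/K)` tends to `1` as `K → ∞`. -/
theorem approx_search_entropy_ratio (l : ℕ) (hl : 1 ≤ l) (M : ℕ → ℕ)
    (hM : ∀ K, 1 ≤ M K)
    (hMo : Tendsto (fun K : ℕ => (M K : ℝ) / K) atTop (nhds 0)) :
    Tendsto
      (fun K : ℕ =>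
        (1 - (l : ℝ) * M K / K) *
            Real.binEntropy ((M K : ℝ) / ((K : ℝ) - l * M K)) / Real.binEntropy ((M K : ℝ) / K))
      atTop (nhds 1) := by
  have hp : Tendsto (fun K : ℕ => (M K : ℝ) / K) atTop (nhdsWithin 0 (Set.Ioi 0)) := by
    rw [tendsto_nhdsWithin_iff]
    refine ⟨hMo, ?_⟩
    filter_upwards [eventually_ge_atTop 1] with K hK
    have h1 : (0:ℝ) < M K := by exact_mod_cast Nat.lt_of_lt_of_le Nat.zero_lt_one (hM K)
    have h2 : (0:ℝ) < K := by exact_mod_cast Nat.lt_of_lt_of_le Nat.zero_lt_one hK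
    exact div_pos h1 h2
  have := (lemB (l : ℝ) (by positivity)).comp hp
  refine this.congr' ?_
  filter_upwards [eventually_ge_atTop 1] with K hK
  have hK0 : ((K : ℝ)) ≠ 0 := by
    have : (0:ℝ) < K := by exact_mod_cast Nat.lt_of_lt_of_le Nat.zero_lt_one hK
    exact this.ne'
  simp only [Function.comp_apply]
  have h1 : (l : ℝ) * ((M K : ℝ) / K) = (l : ℝ) * M K / K := by ring
  have h2 : (1 : ℝ) - (l : ℝ) * M K / K = ((K : ℝ) - l * M K) / K := by field_simp
  rw [h1, h2, div_div_div_cancel_right₀ _ _, ← h2]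
  exact hK0
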